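/- Let T = ℕ₀ be the tree rooted at 0 with n ∼ m iff |n−m| = 1, and φ(0) = 0, φ(n) = 2n for n ≥ 1. Then the operator norm of C_φ on Lip_0(T) equals 2 = λ_φ, while 1 + |φ(0)| = 1; hence the upper estimate ‖C_φ‖ ≤ max{1+|φ(o)|, λ_φ} is attained and is sharp. -/

import Mathlib

/-- `Lip₀(ℕ₀)`: bounded successive differences tending to `0`. -/
def MemLip0N (f : ℕ → ℂ) : Prop :=
  (∃ C : ℝ, ∀ n : ℕ, ‖f (n + 1) - f n‖ ≤ C) ∧
  Filter.Tendsto (fun n : ℕ => ‖f (n + 1) - f n‖) Filter.atTop (nhds 0)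

/-- the Lipschitz norm on `ℕ₀`. -/
noncomputable def normLipN (f : ℕ → ℂ) : ℝ :=
  max (‖f 0‖) (sSup {r : ℝ | ∃ n : ℕ, r = ‖f (n + 1) - f n‖})

/-- For the tree `ℕ₀` rooted at `0` and `φ(0) = 0`, `φ(n) = 2n` for `n ≥ 1`, the operator
norm of `C_φ` on `Lip₀` equals `2 = λ_φ`, while `1 + |φ(0)| = 1`; so the upper estimate
`‖C_φ‖ ≤ max {1 + |φ(0)|, λ_φ}` is attained and sharp. -/
theorem opNorm_example_sharp (φ : ℕ → ℕ) (hφ : φ 0 = 0) (hφ' : ∀ n : ℕ, 1 ≤ n → φ n = 2 * n) :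
    sInf {C : ℝ | 0 ≤ C ∧ ∀ f : ℕ → ℂ, MemLip0N f → normLipN (f ∘ φ) ≤ C * normLipN f} = 2 ∧
    sSup {r : ℝ | ∃ n : ℕ, 1 ≤ n ∧ r = |(φ n : ℝ) - (φ (n - 1) : ℝ)|} = 2 ∧
    1 + (φ 0 : ℝ) = 1 := by
  have hφ2 : ∀ n : ℕ, φ n = 2 * n := by
    intro n
    rcases n with _ | n
    · simpa using hφ
    · exact hφ' _ (Nat.succ_le_succ (Nat.zero_le _))
  refine ⟨?_, ?_, by simp [hφ]⟩
  · -- the operator norm part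
    -- the test function f(n) = min n 2
    set f : ℕ → ℂ := fun n => ((min n 2 : ℕ) : ℂ) with hfdef
    have hf0 : f 0 = 0 := by simp [hfdef]
    have hf1 : f 1 = 1 := by norm_num [hfdef]
    have hfbig : ∀ n, 2 ≤ n → f n = 2 := by
      intro n hn
      simp [hfdef, Nat.min_eq_right hn]
    have hdiff1 : ∀ n, ‖f (n + 1) - f n‖ ≤ 1 := by
      intro n
      rcases n with _ | _ | n
      · rw [hf1, hf0]; simp
      · rw [hfbig 2 le_rfl, hf1]; norm_num
      · rw [hfbig (n + 3) (by omega), hfbig (n + 2) (by omega)]; simp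
    have hmem : MemLip0N f := by
      refine ⟨⟨1, hdiff1⟩, ?_⟩
      have hev : (fun _ : ℕ => (0 : ℝ)) =ᶠ[Filter.atTop]
          fun n : ℕ => ‖f (n + 1) - f n‖ := by
        filter_upwards [Filter.eventually_ge_atTop 2] with n hn
        rw [hfbig (n + 1) (by omega), hfbig n hn]
        simp
      exact Filter.Tendsto.congr' hev tendsto_const_nhds
    have hnorm_f : normLipN f = 1 := by
      unfold normLipN
      rw [hf0]
      have hs : sSup {r : ℝ | ∃ n : ℕ, r = ‖f (n + 1) - f n‖} = 1 := by
        apply le_antisymm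
        · apply Real.sSup_le
          · rintro r ⟨n, rfl⟩; exact hdiff1 n
          · norm_num
        · apply le_csSup
          · exact ⟨1, by rintro r ⟨n, rfl⟩; exact hdiff1 n⟩
          · exact ⟨0, by rw [zero_add, hf1, hf0]; simp⟩
      rw [hs]; simp
    -- upper bound : 2 works
    have hub : ∀ g : ℕ → ℂ, MemLip0N g → normLipN (g ∘ φ) ≤ 2 * normLipN g := by
      intro g hg
      obtain ⟨⟨C, hC⟩, _⟩ := hg
      set S := sSup {r : ℝ | ∃ n : ℕ, r = ‖g (n + 1) - g n‖} with hSdef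
      have hbdd : BddAbove {r : ℝ | ∃ n : ℕ, r = ‖g (n + 1) - g n‖} :=
        ⟨C, by rintro r ⟨n, rfl⟩; exact hC n⟩
      have hdle : ∀ n, ‖g (n + 1) - g n‖ ≤ S := fun n => le_csSup hbdd ⟨n, rfl⟩
      have hSN : S ≤ normLipN g := le_max_right _ _
      have hgN : ‖g 0‖ ≤ normLipN g := le_max_left _ _
      have hN0 : 0 ≤ normLipN g :=
        le_trans (norm_nonneg (g 0)) hgN
      have h1 : ‖(g ∘ φ) 0‖ ≤ 2 * normLipN g := by
        simp only [Function.comp_apply, hφ]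
        linarith
      have h2 : sSup {r : ℝ | ∃ n : ℕ, r = ‖(g ∘ φ) (n + 1) - (g ∘ φ) n‖} ≤
          2 * normLipN g := by
        apply Real.sSup_le
        · rintro r ⟨n, rfl⟩
          simp only [Function.comp_apply]
          rw [hφ2 (n + 1), hφ2 n, show 2 * (n + 1) = 2 * n + 1 + 1 from by ring]
          calc ‖g (2 * n + 1 + 1) - g (2 * n)‖
              = ‖(g (2 * n + 1 + 1) - g (2 * n + 1)) +
                (g (2 * n + 1) - g (2 * n))‖ := by ring_nf
            _ ≤ ‖g (2 * n + 1 + 1) - g (2 * n + 1)‖ +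
                ‖g (2 * n + 1) - g (2 * n)‖ := norm_add_le _ _
            _ ≤ S + S := add_le_add (hdle _) (hdle _)
            _ ≤ 2 * normLipN g := by linarith
        · linarith
      exact max_le h1 h2
    -- lower bound via the test function
    have habsf : ∀ m, ‖f m‖ ≤ 2 := by
      intro m
      have : ‖f m‖ = ((min m 2 : ℕ) : ℝ) := by
        simp [hfdef]
      rw [this]
      exact_mod_cast Nat.cast_le.mpr (min_le_right m 2)
    have hDbdd : BddAbove {r : ℝ | ∃ n : ℕ, r = ‖(f ∘ φ) (n + 1) - (f ∘ φ) n‖} := by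
      refine ⟨4, ?_⟩
      rintro r ⟨n, rfl⟩
      calc ‖(f ∘ φ) (n + 1) - (f ∘ φ) n‖
          ≤ ‖(f ∘ φ) (n + 1)‖ + ‖(f ∘ φ) n‖ := by
            simpa [sub_eq_add_neg] using norm_add_le ((f ∘ φ) (n + 1)) (-(f ∘ φ) n)
        _ ≤ 2 + 2 := add_le_add (habsf _) (habsf _)
        _ = 4 := by norm_num
    have h2mem : (2 : ℝ) ∈ {r : ℝ | ∃ n : ℕ, r = ‖(f ∘ φ) (n + 1) - (f ∘ φ) n‖} := by
      refine ⟨0, ?_⟩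
      simp only [Function.comp_apply, zero_add, hφ2]
      rw [show 2 * 1 = 2 from rfl, show 2 * 0 = 0 from rfl, hfbig 2 le_rfl, hf0]
      simp
    have hlow : (2 : ℝ) ≤ normLipN (f ∘ φ) :=
      le_trans (le_csSup hDbdd h2mem) (le_max_right _ _)
    -- put together
    apply le_antisymm
    · exact csInf_le ⟨0, fun x hx => hx.1⟩ ⟨by norm_num, hub⟩
    · refine le_csInf ⟨2, ⟨by norm_num, hub⟩⟩ ?_
      rintro C ⟨hC0, hC⟩
      have := hC f hmem
      rw [hnorm_f, mul_one] at this
      linarith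
  · -- the λ_φ part
    have hval : ∀ n : ℕ, 1 ≤ n → |(φ n : ℝ) - (φ (n - 1) : ℝ)| = 2 := by
      intro n hn
      obtain ⟨m, rfl⟩ : ∃ m, n = m + 1 := ⟨n - 1, by omega⟩
      simp only [Nat.add_sub_cancel, hφ2]
      push_cast
      rw [show 2 * ((m : ℝ) + 1) - 2 * (m : ℝ) = 2 from by ring]
      norm_num
    apply le_antisymm
    · apply Real.sSup_le
      · rintro r ⟨n, hn, rfl⟩
        rw [hval n hn]
      · norm_num
    · apply le_csSup
      · refine ⟨2, ?_⟩
        rintro r ⟨n, hn, rfl⟩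
        rw [hval n hn]
      · exact ⟨1, le_rfl, (hval 1 le_rfl).symm⟩
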